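/- For integers v ≥ 2 and k ≥ 0, the sum Σ_{i=0}^{k} (vi)!/(i!)^v is at most (v(k+1))!/((k+1)!)^v. -/

import Mathlib

lemma aux_fact (a b : ℕ) : a.factorial * (a + 1) ^ b ≤ (a + b).factorial := by
  induction b with
  | zero => simp
  | succ b ih =>
      have h1 : (a + b + 1).factorial = (a + b + 1) * (a + b).factorial :=
        Nat.factorial_succ _
      calc a.factorial * (a + 1) ^ (b + 1)
          = (a + 1) * (a.factorial * (a + 1) ^ b) := by ring
        _ ≤ (a + b + 1) * (a + b).factorial := by
            apply Nat.mul_le_mul (by omega) ih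
        _ = (a + (b + 1)).factorial := by rw [← h1]; ring_nf

lemma key_fact (v n : ℕ) (hv : 2 ≤ v) :
    2 * (v * n).factorial * (n + 1) ^ v ≤ (v * (n + 1)).factorial := by
  obtain ⟨w, rfl⟩ : ∃ w, v = w + 1 := ⟨v - 1, by omega⟩
  have h1 : (w + 1) * (n + 1) = ((w + 1) * n + w) + 1 := by ring
  rw [h1, Nat.factorial_succ]
  have h2 : ((w + 1) * n).factorial * ((w + 1) * n + 1) ^ w ≤ ((w + 1) * n + w).factorial :=
    aux_fact _ _
  calc 2 * ((w + 1) * n).factorial * (n + 1) ^ (w + 1)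
      = (2 * (n + 1)) * (((w + 1) * n).factorial * (n + 1) ^ w) := by ring
    _ ≤ (((w + 1) * n + w) + 1) * (((w + 1) * n).factorial * ((w + 1) * n + 1) ^ w) := by
        apply Nat.mul_le_mul
        · nlinarith
        · exact Nat.mul_le_mul_left _ (Nat.pow_le_pow_left (by nlinarith) w)
    _ ≤ (((w + 1) * n + w) + 1) * ((w + 1) * n + w).factorial :=
        Nat.mul_le_mul_left _ h2

lemma dvd_fact (v n : ℕ) : (n.factorial) ^ v ∣ (v * n).factorial := by
  have := Nat.prod_factorial_dvd_factorial_sum (Finset.univ : Finset (Fin v)) (fun _ => n)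
  simpa [Finset.prod_const, Finset.sum_const, Finset.card_univ, mul_comm] using this

lemma step_fact (v n : ℕ) (hv : 2 ≤ v) :
    2 * ((v * n).factorial / (n.factorial) ^ v) ≤
      (v * (n + 1)).factorial / ((n + 1).factorial) ^ v := by
  have hpos : 0 < ((n + 1).factorial) ^ v := Nat.pow_pos (Nat.factorial_pos _)
  rw [Nat.le_div_iff_mul_le hpos]
  have hfac : ((n + 1).factorial) ^ v = (n + 1) ^ v * (n.factorial) ^ v := by
    rw [Nat.factorial_succ, mul_pow]
  rw [hfac]
  have hd : (n.factorial) ^ v ∣ (v * n).factorial := dvd_fact v n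
  calc 2 * ((v * n).factorial / (n.factorial) ^ v) * ((n + 1) ^ v * (n.factorial) ^ v)
      = 2 * ((v * n).factorial / (n.factorial) ^ v * (n.factorial) ^ v) * (n + 1) ^ v := by
        ring
    _ = 2 * (v * n).factorial * (n + 1) ^ v := by rw [Nat.div_mul_cancel hd]
    _ ≤ (v * (n + 1)).factorial := key_fact v n hv

/-- `∑_{i=0}^{k} binom(vi; i,…,i) ≤ binom(v(k+1); k+1,…,k+1)` for `v ≥ 2`. -/
theorem stmt_6 (v k : ℕ) (hv : 2 ≤ v) :
    ∑ i ∈ Finset.range (k + 1), (v * i).factorial / (i.factorial) ^ v ≤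
      (v * (k + 1)).factorial / ((k + 1).factorial) ^ v := by
  induction k with
  | zero =>
      rw [Finset.sum_range_one]
      simpa using Nat.one_le_iff_ne_zero.mpr (Nat.factorial_pos v).ne'
  | succ k ih =>
      rw [Finset.sum_range_succ]
      have h2 : ∑ i ∈ Finset.range (k + 1), (v * i).factorial / (i.factorial) ^ v
          + (v * (k + 1)).factorial / ((k + 1).factorial) ^ v
          ≤ 2 * ((v * (k + 1)).factorial / ((k + 1).factorial) ^ v) := by omega
      exact h2.trans (step_fact v (k + 1) hv)
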